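/- Let K > 0, B > 0, T > 0, and 0 < α < 1. The function h(ω) = [sin(ωT)/(cos(ωT) − 1)] · [B·K²·ω^α·sin(πα/2) / (B²·ω^{2α} + 2·B·K·cos(πα/2)·ω^α + K²)] is strictly monotonically increasing on the interval (0, π/T]. -/

import Mathlib

open Real

/-- Auxiliary algebraic positivity lemma: the derivative expression of the
fractional Maxwell imaginary part is positive. -/
theorem fm_aux_pos (B K T a w s c s2 c2 p : ℝ)
    (hB : 0 < B) (hK : 0 < K) (hs2 : 0 < s2) (hc2 : 0 < c2)
    (hw : 0 < w) (hT : 0 < T) (hs : 0 < s) (hslt : s < w * T) (hc : c < 1)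
    (hp : 0 < p) (ha : 0 < a) (ha1 : a < 1) :
    0 < T / (1 - c) * (B * K ^ 2 * p * s2 / (B ^ 2 * p ^ 2 + 2 * B * K * c2 * p + K ^ 2)) +
      s / (c - 1) * (B * K ^ 2 * s2 * a * p * (K ^ 2 - B ^ 2 * p ^ 2) /
        (w * (B ^ 2 * p ^ 2 + 2 * B * K * c2 * p + K ^ 2) ^ 2)) := by
  set D : ℝ := B ^ 2 * p ^ 2 + 2 * B * K * c2 * p + K ^ 2 with hDdef
  have hD : 0 < D := by positivity
  have h1c : (0:ℝ) < 1 - c := by linarith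
  have hbr : 0 < T * w * D - s * a * (K ^ 2 - B ^ 2 * p ^ 2) := by
    have h1 : a * s < w * T := by nlinarith
    have h2 : T * w * K ^ 2 ≤ T * w * D := by
      nlinarith [sq_nonneg (B * p), mul_pos (mul_pos hB hK) (mul_pos hc2 hp)]
    nlinarith [mul_nonneg (mul_nonneg ha.le hs.le)
      (mul_nonneg (sq_nonneg B) (sq_nonneg p)),
      mul_lt_mul_of_pos_right h1 (pow_pos hK 2)]
  have key : T / (1 - c) * (B * K ^ 2 * p * s2 / D) +
      s / (c - 1) * (B * K ^ 2 * s2 * a * p * (K ^ 2 - B ^ 2 * p ^ 2) / (w * D ^ 2)) =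
      B * K ^ 2 * s2 * p * (T * w * D - s * a * (K ^ 2 - B ^ 2 * p ^ 2)) /
        ((1 - c) * D ^ 2 * w) := by
    have hcne : c - 1 ≠ 0 := by linarith
    field_simp
    ring
  rw [key]
  exact div_pos
    (mul_pos (mul_pos (mul_pos (mul_pos hB (pow_pos hK 2)) hs2) hp) hbr)
    (mul_pos (mul_pos h1c (pow_pos hD 2)) hw)

/-- For `K > 0`, `B > 0`, `T > 0`, `0 < α < 1`, the function
`h(ω) = [sin(ωT)/(cos(ωT) − 1)] ·
        [B·K²·ω^α·sin(πα/2) / (B²·ω^{2α} + 2·B·K·cos(πα/2)·ω^α + K²)]`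
is strictly monotonically increasing on `(0, π/T]`. -/
theorem fractional_maxwell_imag_part_strictMonoOn
    (K B T α : ℝ) (hK : 0 < K) (hB : 0 < B) (hT : 0 < T) (h0 : 0 < α) (h1 : α < 1) :
    StrictMonoOn
      (fun ω : ℝ =>
        (Real.sin (ω * T) / (Real.cos (ω * T) - 1)) *
          (B * K ^ 2 * ω ^ α * Real.sin (π * α / 2) /
            (B ^ 2 * ω ^ (2 * α) + 2 * B * K * Real.cos (π * α / 2) * ω ^ α + K ^ 2)))
      (Set.Ioc 0 (π / T)) := by
  have hpi := Real.pi_pos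
  set s2 : ℝ := Real.sin (π * α / 2) with hs2def
  set c2 : ℝ := Real.cos (π * α / 2) with hc2def
  have hs2 : 0 < s2 := Real.sin_pos_of_pos_of_lt_pi (by nlinarith) (by nlinarith)
  have hc2 : 0 < c2 := Real.cos_pos_of_mem_Ioo ⟨by nlinarith, by nlinarith⟩
  have hDpos : ∀ ω : ℝ, 0 < ω →
      0 < B ^ 2 * ω ^ (2 * α) + 2 * B * K * c2 * ω ^ α + K ^ 2 := by
    intro ω hω
    have h1 : 0 < ω ^ (2 * α) := Real.rpow_pos_of_pos hω _
    have h2 : 0 < ω ^ α := Real.rpow_pos_of_pos hω _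
    positivity
  have hclt : ∀ ω : ℝ, ω ∈ Set.Ioc 0 (π / T) → Real.cos (ω * T) < 1 := by
    intro ω hω
    have h1 : 0 < ω * T := mul_pos hω.1 hT
    have h2 : ω * T ≤ π := by
      have := hω.2
      calc ω * T ≤ (π / T) * T := by nlinarith
        _ = π := by field_simp
    calc Real.cos (ω * T) < Real.cos 0 :=
          Real.cos_lt_cos_of_nonneg_of_le_pi le_rfl (by linarith) h1
      _ = 1 := Real.cos_zero
  apply strictMonoOn_of_deriv_pos (convex_Ioc 0 (π / T))
  · -- continuity
    intro ω hω
    apply ContinuousAt.continuousWithinAt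
    have hcne : Real.cos (ω * T) - 1 ≠ 0 := by
      have := hclt ω hω
      linarith
    have hDne : B ^ 2 * ω ^ (2 * α) + 2 * B * K * c2 * ω ^ α + K ^ 2 ≠ 0 :=
      (hDpos ω hω.1).ne'
    have hrp : ContinuousAt (fun x : ℝ => x ^ α) ω :=
      Real.continuousAt_rpow_const ω α (Or.inl hω.1.ne')
    have hrp2 : ContinuousAt (fun x : ℝ => x ^ (2 * α)) ω :=
      Real.continuousAt_rpow_const ω (2 * α) (Or.inl hω.1.ne')
    have hs : ContinuousAt (fun x : ℝ => Real.sin (x * T)) ω :=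
      (Real.continuous_sin.comp (continuous_id.mul continuous_const)).continuousAt
    have hc : ContinuousAt (fun x : ℝ => Real.cos (x * T) - 1) ω :=
      ((Real.continuous_cos.comp (continuous_id.mul continuous_const)).sub
        continuous_const).continuousAt
    exact (hs.div hc hcne).mul
      ((((continuousAt_const.mul hrp).mul continuousAt_const).div
        (((continuousAt_const.mul hrp2).add
          (continuousAt_const.mul hrp)).add continuousAt_const) hDne))
  · -- derivative positive on the interior
    rw [interior_Ioc]
    intro ω hω
    have hω0 : 0 < ω := hω.1
    have hωT : 0 < ω * T := mul_pos hω0 hT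
    have hωTpi : ω * T < π := by
      have := hω.2
      calc ω * T < (π / T) * T := by nlinarith
        _ = π := by field_simp
    have hspos : 0 < Real.sin (ω * T) := Real.sin_pos_of_pos_of_lt_pi hωT hωTpi
    have hslt : Real.sin (ω * T) < ω * T := Real.sin_lt hωT
    have hc1 : Real.cos (ω * T) < 1 := hclt ω ⟨hω0, le_of_lt hω.2⟩
    have hcne : Real.cos (ω * T) - 1 ≠ 0 := by linarith
    have hppos : 0 < ω ^ α := Real.rpow_pos_of_pos hω0 _
    have hpa : ω ^ (α - 1) = ω ^ α / ω := by
      rw [Real.rpow_sub hω0, Real.rpow_one]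
    have hp2 : ω ^ (2 * α) = (ω ^ α) ^ 2 := by
      rw [mul_comm, Real.rpow_mul hω0.le, ← Real.rpow_natCast (ω ^ α) 2]
      norm_num
    have hp21 : ω ^ (2 * α - 1) = (ω ^ α) ^ 2 / ω := by
      rw [Real.rpow_sub hω0, hp2, Real.rpow_one]
    have hDne : B ^ 2 * ω ^ (2 * α) + 2 * B * K * c2 * ω ^ α + K ^ 2 ≠ 0 :=
      (hDpos ω hω0).ne'
    have hDne2 : B ^ 2 * (ω ^ α) ^ 2 + 2 * B * K * c2 * ω ^ α + K ^ 2 ≠ 0 := by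
      rw [← hp2]; exact hDne
    -- derivative of the first factor
    have hS : HasDerivAt (fun x : ℝ => Real.sin (x * T)) (Real.cos (ω * T) * T) ω := by
      have := (Real.hasDerivAt_sin (ω * T)).comp ω ((hasDerivAt_id ω).mul_const T)
      simp only [id, one_mul] at this
      exact this
    have hC : HasDerivAt (fun x : ℝ => Real.cos (x * T) - 1)
        (-Real.sin (ω * T) * T) ω := by
      have := ((Real.hasDerivAt_cos (ω * T)).comp ω
        ((hasDerivAt_id ω).mul_const T)).sub_const 1
      simpa using this
    have hf1 : HasDerivAt (fun x : ℝ => Real.sin (x * T) / (Real.cos (x * T) - 1))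
        (T / (1 - Real.cos (ω * T))) ω := by
      have h := hS.div hC hcne
      refine h.congr_deriv ?_
      symm
      have hpyth : Real.sin (ω * T) ^ 2 + Real.cos (ω * T) ^ 2 = 1 :=
        Real.sin_sq_add_cos_sq (ω * T)
      rw [div_eq_div_iff (ne_of_gt (by linarith : (0:ℝ) < 1 - Real.cos (ω * T)))
        (pow_ne_zero 2 hcne)]
      linear_combination T * (Real.cos (ω * T) - 1) * hpyth
    -- derivative of the second factor
    have hP : HasDerivAt (fun x : ℝ => x ^ α) (α * ω ^ (α - 1)) ω :=
      Real.hasDerivAt_rpow_const (Or.inl hω0.ne')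
    have hP2 : HasDerivAt (fun x : ℝ => x ^ (2 * α)) (2 * α * ω ^ (2 * α - 1)) ω :=
      Real.hasDerivAt_rpow_const (Or.inl hω0.ne')
    have hN : HasDerivAt (fun x : ℝ => B * K ^ 2 * x ^ α * s2)
        (B * K ^ 2 * (α * ω ^ (α - 1)) * s2) ω :=
      (hP.const_mul (B * K ^ 2)).mul_const s2
    have hDder : HasDerivAt
        (fun x : ℝ => B ^ 2 * x ^ (2 * α) + 2 * B * K * c2 * x ^ α + K ^ 2)
        (B ^ 2 * (2 * α * ω ^ (2 * α - 1)) + 2 * B * K * c2 * (α * ω ^ (α - 1))) ω := by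
      have := ((hP2.const_mul (B ^ 2)).add (hP.const_mul (2 * B * K * c2))).add_const (K ^ 2)
      simpa using this
    have hf2 : HasDerivAt
        (fun x : ℝ => B * K ^ 2 * x ^ α * s2 /
          (B ^ 2 * x ^ (2 * α) + 2 * B * K * c2 * x ^ α + K ^ 2))
        (B * K ^ 2 * s2 * α * ω ^ α * (K ^ 2 - B ^ 2 * (ω ^ α) ^ 2) /
          (ω * (B ^ 2 * (ω ^ α) ^ 2 + 2 * B * K * c2 * ω ^ α + K ^ 2) ^ 2)) ω := by
      have h := hN.div hDder hDne
      refine h.congr_deriv ?_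
      rw [hpa, hp2, hp21]
      field_simp
      ring
    have hh : HasDerivAt
        (fun ω : ℝ =>
          (Real.sin (ω * T) / (Real.cos (ω * T) - 1)) *
            (B * K ^ 2 * ω ^ α * s2 /
              (B ^ 2 * ω ^ (2 * α) + 2 * B * K * c2 * ω ^ α + K ^ 2)))
        (T / (1 - Real.cos (ω * T)) *
            (B * K ^ 2 * ω ^ α * s2 /
              (B ^ 2 * ω ^ (2 * α) + 2 * B * K * c2 * ω ^ α + K ^ 2)) +
          Real.sin (ω * T) / (Real.cos (ω * T) - 1) *
            (B * K ^ 2 * s2 * α * ω ^ α * (K ^ 2 - B ^ 2 * (ω ^ α) ^ 2) /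
              (ω * (B ^ 2 * (ω ^ α) ^ 2 + 2 * B * K * c2 * ω ^ α + K ^ 2) ^ 2))) ω :=
      hf1.mul hf2
    rw [hh.deriv, hp2]
    exact fm_aux_pos B K T α ω (Real.sin (ω * T)) (Real.cos (ω * T)) s2 c2 (ω ^ α)
      hB hK hs2 hc2 hω0 hT hspos hslt hc1 hppos h0 h1
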